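/- Let Z be a compound random sequence with nonempty state set S such that each Z_{n,s} is square-integrable with mean m_{n,s} := E[Z_{n,s}] and variance σ²_{n,s}. Assume: (i) lim_{n→∞} sup_{s∈S} σ²_{n,s} = 0, and (ii) there is a constant B with |m_{n,s}| ≤ B for all n and s. Then cinf(Z) = liminf_{n→∞} inf_{s∈S} m_{n,s}. -/

import Mathlib

open Filter MeasureTheory ProbabilityTheory

noncomputable section

/-- The set of rates `R` for which `sup_{s∈S} P(Z_{n,s} ≤ R) → 0` as `n → ∞`;
its supremum is the compound infimum `cinf`. -/
def cinfSet {S : Type*} (μ : ℕ → S → Measure ℝ) : Set ℝ :=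
  {R : ℝ | Tendsto (fun n => ⨆ s : S, μ n s {x : ℝ | x ≤ R}) atTop (nhds 0)}

/-- The compound infimum of a compound random sequence given by its laws `μ n s`. -/
def cinf {S : Type*} (μ : ℕ → S → Measure ℝ) : ℝ := sSup (cinfSet μ)

/-- if each `Z_{n,s}` is square-integrable with mean `m_{n,s}` and variance
`σ²_{n,s}`, `sup_{s∈S} σ²_{n,s} → 0`, and the means are uniformly bounded, then
`cinf(Z) = liminf_{n→∞} inf_{s∈S} m_{n,s}`. -/
theorem cinf_eq_liminf_iInf_mean {S : Type*} [Nonempty S]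
    (μ : ℕ → S → Measure ℝ) (hprob : ∀ n s, IsProbabilityMeasure (μ n s))
    (hL2 : ∀ n s, MemLp (fun x : ℝ => x) 2 (μ n s))
    (hvar : Tendsto (fun n => ⨆ s : S, ENNReal.ofReal (variance (fun x : ℝ => x) (μ n s)))
      atTop (nhds 0))
    (B : ℝ) (hB : ∀ n s, |∫ x, x ∂(μ n s)| ≤ B) :
    cinf μ = Filter.liminf (fun n => ⨅ s : S, ∫ x, x ∂(μ n s)) atTop := by
  set m : ℕ → S → ℝ := fun n s => ∫ x, x ∂(μ n s) with hm
  set v : ℕ → S → ℝ := fun n s => variance (fun x : ℝ => x) (μ n s) with hv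
  set g : ℕ → ℝ := fun n => ⨅ s, m n s with hg
  have hmB : ∀ n s, -B ≤ m n s ∧ m n s ≤ B := fun n s => abs_le.mp (hB n s)
  have hgbdd : ∀ n, BddBelow (Set.range (m n)) := fun n =>
    ⟨-B, by rintro x ⟨s, rfl⟩; exact (hmB n s).1⟩
  have hglb : ∀ n, -B ≤ g n := fun n => le_ciInf fun s => (hmB n s).1
  have hgub : ∀ n, g n ≤ B := fun n =>
    (ciInf_le (hgbdd n) (Classical.arbitrary S)).trans (hmB n _).2
  set L := Filter.liminf g atTop with hL
  have hbdd_le : IsBoundedUnder (· ≤ ·) atTop g := isBoundedUnder_of ⟨B, hgub⟩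
  have hbdd_ge : IsBoundedUnder (· ≥ ·) atTop g := isBoundedUnder_of ⟨-B, hglb⟩
  have cheb : ∀ n s {c : ℝ}, 0 < c →
      μ n s {x : ℝ | c ≤ |x - m n s|} ≤ ENNReal.ofReal (v n s / c ^ 2) := by
    intro n s c hc
    have := hprob n s
    exact meas_ge_le_variance_div_sq (hL2 n s) hc
  -- Step A: every R < L lies in the cinf set.
  have memA : ∀ R < L, R ∈ cinfSet μ := by
    intro R hR
    set c := (R + L) / 2 with hc
    have hRc : R < c := by rw [hc]; linarith
    have hcL : c < L := by rw [hc]; linarith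
    set δ := c - R with hδ
    have hδpos : 0 < δ := by rw [hδ]; linarith
    have hev : ∀ᶠ n in atTop, c < g n :=
      eventually_lt_of_lt_liminf hcL hbdd_ge
    have hbound : ∀ᶠ n in atTop,
        (⨆ s, μ n s {x : ℝ | x ≤ R}) ≤
          (⨆ s, ENNReal.ofReal (v n s)) * ENNReal.ofReal ((δ ^ 2)⁻¹) := by
      filter_upwards [hev] with n hn
      refine iSup_le fun s => ?_
      have hms : c ≤ m n s := hn.le.trans (ciInf_le (hgbdd n) s)
      have hsub : {x : ℝ | x ≤ R} ⊆ {x : ℝ | δ ≤ |x - m n s|} := by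
        intro x hx
        simp only [Set.mem_setOf_eq] at hx ⊢
        rw [abs_sub_comm, abs_of_nonneg (by linarith)]
        linarith
      calc μ n s {x : ℝ | x ≤ R} ≤ μ n s {x : ℝ | δ ≤ |x - m n s|} := measure_mono hsub
        _ ≤ ENNReal.ofReal (v n s / δ ^ 2) := cheb n s hδpos
        _ = ENNReal.ofReal (v n s) * ENNReal.ofReal ((δ ^ 2)⁻¹) := by
            rw [div_eq_mul_inv, ENNReal.ofReal_mul (variance_nonneg _ _)]
        _ ≤ (⨆ s, ENNReal.ofReal (v n s)) * ENNReal.ofReal ((δ ^ 2)⁻¹) :=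
            mul_le_mul_left (le_iSup (fun s => ENNReal.ofReal (v n s)) s) _
    have htend : Tendsto (fun n => (⨆ s, ENNReal.ofReal (v n s)) * ENNReal.ofReal ((δ ^ 2)⁻¹))
        atTop (nhds 0) := by
      have := ENNReal.Tendsto.mul_const (b := ENNReal.ofReal ((δ ^ 2)⁻¹)) hvar
        (Or.inr ENNReal.ofReal_ne_top)
      simpa using this
    exact tendsto_of_tendsto_of_tendsto_of_le_of_le' tendsto_const_nhds htend
      (Eventually.of_forall fun n => zero_le) hbound
  -- Step B: every member of the cinf set is at most L.
  have memB : ∀ R ∈ cinfSet μ, R ≤ L := by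
    intro R hR
    by_contra hRL
    push_neg at hRL
    set r := (L + R) / 2 with hr
    set δ := R - r with hδ
    have hδpos : 0 < δ := by rw [hδ, hr]; linarith
    have hLr : L < r := by rw [hr]; linarith
    have hfreq : ∃ᶠ n in atTop, g n < r := frequently_lt_of_liminf_lt hbdd_le.isCoboundedUnder_ge hLr
    have hδ4 : (0 : ℝ) < δ ^ 2 / 4 := by positivity
    have hvsmall : ∀ᶠ n in atTop,
        (⨆ s, ENNReal.ofReal (v n s)) < ENNReal.ofReal (δ ^ 2 / 4) :=
      hvar.eventually_lt_const (ENNReal.ofReal_pos.mpr hδ4)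
    have hsup : ∀ᶠ n in atTop, (⨆ s, μ n s {x : ℝ | x ≤ R}) < 1 / 2 :=
      hR.eventually_lt_const (by norm_num)
    obtain ⟨n, hn1, hn2, hn3⟩ := (hfreq.and_eventually (hvsmall.and hsup)).exists
    obtain ⟨s, hs⟩ := exists_lt_of_ciInf_lt hn1
    have hvlt : v n s < δ ^ 2 / 4 := by
      have h4 : ENNReal.ofReal (v n s) < ENNReal.ofReal (δ ^ 2 / 4) :=
        lt_of_le_of_lt (le_iSup (fun s => ENNReal.ofReal (v n s)) s) hn2
      exact (ENNReal.ofReal_lt_ofReal_iff hδ4).mp h4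
    have hsub : {x : ℝ | R < x} ⊆ {x : ℝ | δ ≤ |x - m n s|} := by
      intro x hx
      simp only [Set.mem_setOf_eq] at hx ⊢
      rw [abs_of_nonneg (by linarith)]
      linarith
    have h1 : μ n s {x : ℝ | R < x} ≤ ENNReal.ofReal (v n s / δ ^ 2) :=
      (measure_mono hsub).trans (cheb n s hδpos)
    have h2 : ENNReal.ofReal (v n s / δ ^ 2) ≤ 1 / 4 := by
      have h14 : ENNReal.ofReal (1 / 4 : ℝ) = 1 / 4 := by
        rw [ENNReal.ofReal_div_of_pos (by norm_num : (0:ℝ) < 4), ENNReal.ofReal_one,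
          ENNReal.ofReal_ofNat]
      rw [← h14]
      apply ENNReal.ofReal_le_ofReal
      rw [div_le_div_iff₀ (by positivity) (by norm_num)]
      nlinarith [variance_nonneg (fun x : ℝ => x) (μ n s)]
    have hps := hprob n s
    have htot : μ n s {x : ℝ | x ≤ R} + μ n s {x : ℝ | R < x} = 1 := by
      have hcompl : {x : ℝ | R < x} = {x : ℝ | x ≤ R}ᶜ := by
        ext x; simp [not_le]
      have h' := measure_add_measure_compl (μ := μ n s) (measurableSet_Iic (a := R))
      rw [Set.compl_Iic, measure_univ] at h'
      show μ n s (Set.Iic R) + μ n s (Set.Ioi R) = 1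
      exact h'
    have hle : μ n s {x : ℝ | x ≤ R} < 1 / 2 :=
      lt_of_le_of_lt (le_iSup (fun s => μ n s {x : ℝ | x ≤ R}) s) hn3
    have hcon : (1 : ENNReal) < 1 / 2 + 1 / 4 := by
      have h3 := ENNReal.add_lt_add_of_lt_of_le (measure_ne_top _ _) hle (h1.trans h2)
      rwa [htot] at h3
    have e : (1 / 2 + 1 / 4 : ENNReal) = ENNReal.ofReal (1 / 2 + 1 / 4 : ℝ) := by
      rw [ENNReal.ofReal_add (by norm_num) (by norm_num),
        ENNReal.ofReal_div_of_pos (by norm_num : (0:ℝ) < 2),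
        ENNReal.ofReal_div_of_pos (by norm_num : (0:ℝ) < 4),
        ENNReal.ofReal_one, ENNReal.ofReal_ofNat, ENNReal.ofReal_ofNat]
    rw [e, show (1 : ENNReal) = ENNReal.ofReal (1 : ℝ) by simp,
      ENNReal.ofReal_lt_ofReal_iff (by norm_num)] at hcon
    norm_num at hcon
  -- Combine.
  have hne : (cinfSet μ).Nonempty := ⟨L - 1, memA _ (by linarith)⟩
  have hbddset : BddAbove (cinfSet μ) := ⟨L, fun R hR => memB R hR⟩
  have h1 : cinf μ ≤ L := csSup_le hne memB
  have h2 : L ≤ cinf μ := by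
    refine le_of_forall_pos_le_add fun ε hε => ?_
    have := le_csSup hbddset (memA (L - ε) (by linarith))
    unfold cinf
    linarith
  exact le_antisymm h1 h2

end
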